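/- Let 𝒜 be a C*-subalgebra of the algebra ℱ of bounded matrix sequences such that for every (A_n) ∈ 𝒜 and every k ∈ ℕ the sequence (Σ_k(A_n))_n converges. Then 𝒜 is essentially fractal: any sequence in 𝒜 having a compact subsequence is itself compact. -/

import Mathlib

open Filter Topology

/-- The (L²) operator norm of a complex square matrix. -/
noncomputable def opNorm {n : ℕ} (A : Matrix (Fin n) (Fin n) ℂ) : ℝ :=
  ‖Matrix.toEuclideanCLM (𝕜 := ℂ) A‖

/-- The increasingly sorted list of singular values of `A`
(square roots of the eigenvalues of `Aᴴ * A`). -/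
noncomputable def svList {n : ℕ} (A : Matrix (Fin n) (Fin n) ℂ) : List ℝ :=
  (Finset.univ.val.map fun i =>
    Real.sqrt ((Matrix.isHermitian_conjTranspose_mul_self A).eigenvalues i)).sort (· ≤ ·)

/-- `sigLower A k` is the `k`-th smallest singular value of `A` (1-indexed, `σ_k`);
`0` if `k` is out of range. -/
noncomputable def sigLower {n : ℕ} (A : Matrix (Fin n) (Fin n) ℂ) (k : ℕ) : ℝ :=
  (svList A).getD (k - 1) 0

/-- `sigUpper A k` is the `k`-th largest singular value of `A` (1-indexed, `Σ_k`);
`0` if `k` is out of range (in particular for `k > n`). -/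
noncomputable def sigUpper {n : ℕ} (A : Matrix (Fin n) (Fin n) ℂ) (k : ℕ) : ℝ :=
  if 1 ≤ k ∧ k ≤ n then (svList A).getD (n - k) 0 else 0

/-- `eigCount hA U` is the number of eigenvalues (with multiplicity) of the
hermitian matrix `A` lying in `U ⊆ ℝ`. -/
noncomputable def eigCount {n : ℕ} {A : Matrix (Fin n) (Fin n) ℂ}
    (hA : A.IsHermitian) (U : Set ℝ) : ℕ :=
  Nat.card {i : Fin n // hA.eigenvalues i ∈ U}

/-- A matrix sequence is compact iff `lim_{k→∞} limsup_{n→∞} Σ_k(K_n) = 0`. -/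
def IsCompactSeq (δ : ℕ → ℕ) (K : ∀ n, Matrix (Fin (δ n)) (Fin (δ n)) ℂ) : Prop :=
  Tendsto (fun k => limsup (fun n => sigUpper (K n) k) atTop) atTop (𝓝 0)

/-- if `𝒜` is a C*-subalgebra of the algebra of bounded matrix sequences such
that for each `(A_n) ∈ 𝒜` and each `k` the sequence `(Σ_k(A_n))_n` converges, then `𝒜` is
essentially fractal: every sequence in `𝒜` having a compact subsequence is compact. -/
theorem stmt15 (δ : ℕ → ℕ)
    (𝒜 : Set (∀ n, Matrix (Fin (δ n)) (Fin (δ n)) ℂ))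
    (hbdd : ∀ A ∈ 𝒜, ∃ M, ∀ n, opNorm (A n) ≤ M)
    (hsub : ∀ x ∈ 𝒜, ∀ y ∈ 𝒜, x - y ∈ 𝒜)
    (hmul : ∀ x ∈ 𝒜, ∀ y ∈ 𝒜, x * y ∈ 𝒜)
    (hstar : ∀ x ∈ 𝒜, (fun n => (x n).conjTranspose) ∈ 𝒜)
    (hconv : ∀ A ∈ 𝒜, ∀ k : ℕ, ∃ l, Tendsto (fun n => sigUpper (A n) k) atTop (𝓝 l)) :
    ∀ A ∈ 𝒜, ∀ η : ℕ → ℕ, StrictMono η →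
      IsCompactSeq (δ ∘ η) (fun n => A (η n)) → IsCompactSeq δ A := by
  intro A hA η hη hcomp
  have key : ∀ k, limsup (fun n => sigUpper (A n) k) atTop =
      limsup (fun n => sigUpper (A (η n)) k) atTop := by
    intro k
    obtain ⟨l, hl⟩ := hconv A hA k
    rw [hl.limsup_eq]
    exact ((hl.comp hη.tendsto_atTop).limsup_eq).symm
  unfold IsCompactSeq at hcomp ⊢
  simpa only [key] using hcomp
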